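/- Let S be a standard graded algebra over a field k, and let F = ⊕_{i∈ℤ} F_i and G = ⊕_{i∈ℤ} G_i be finitely generated graded free S-modules (so F_i = 0 and G_i = 0 for all sufficiently small i). Let a and b be integers, let d₂ ≥ 1 be a positive integer, and let M : F → G, M̌ : G → F, N_F : F → F, N_G : G → G be S-linear maps that are homogeneous of degrees a, b, d₂, d₂ respectively (i.e. M(F_i) ⊆ G_{i+a}, M̌(G_i) ⊆ F_{i+b}, N_F(F_i) ⊆ F_{i+d₂}, N_G(G_i) ⊆ G_{i+d₂}). Assume the commutation relations N_G ∘ M = M ∘ N_F and M̌ ∘ N_G = N_F ∘ M̌, and assume the exactness conditions ker(M̌ ∘ M) = im(N_F), ker(N_F) = im(M̌ ∘ M), ker(M ∘ M̌) = im(N_G), and ker(N_G) = im(M ∘ M̌). Then ker(M) = im(M̌ ∘ N_G), ker(M̌) = im(M ∘ N_F), ker(M̌ ∘ N_G) = im(M), and ker(M ∘ N_F) = im(M̌). -/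

import Mathlib

section Aux

variable {k F G : Type*} [Semiring k] [AddCommGroup F] [Module k F]
  [AddCommGroup G] [Module k G]
  (ℱ : ℤ → Submodule k F) (𝒢 : ℤ → Submodule k G)
  [DirectSum.Decomposition ℱ] [DirectSum.Decomposition 𝒢]

lemma aux_proj (T : F →+ G) (c : ℤ) (hT : ∀ (i : ℤ) (x : F), x ∈ ℱ i → T x ∈ 𝒢 (i + c))
    (j : ℤ) (x : F) :
    ((DirectSum.decompose 𝒢 (T x)) (j + c) : G) = T ((DirectSum.decompose ℱ x) j : F) := by
  induction x using DirectSum.Decomposition.inductionOn ℱ with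
  | zero => simp
  | @homogeneous i xi =>
    by_cases h : j = i
    · subst h
      rw [DirectSum.decompose_of_mem_same 𝒢 (hT j xi xi.2),
        DirectSum.decompose_of_mem_same ℱ xi.2]
    · rw [DirectSum.decompose_of_mem_ne 𝒢 (hT i xi xi.2) (by omega : i + c ≠ j + c),
        DirectSum.decompose_of_mem_ne ℱ xi.2 (Ne.symm h), map_zero]
  | add x y hx hy =>
    rw [map_add, DirectSum.decompose_add, DirectSum.add_apply, Submodule.coe_add, hx, hy,
      DirectSum.decompose_add, DirectSum.add_apply, Submodule.coe_add, map_add]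

lemma aux_ker (T : F →+ G) (c : ℤ) (hT : ∀ (i : ℤ) (x : F), x ∈ ℱ i → T x ∈ 𝒢 (i + c))
    {x : F} (hx : T x = 0) (j : ℤ) : T ((DirectSum.decompose ℱ x) j : F) = 0 := by
  rw [← aux_proj ℱ 𝒢 T c hT j x, hx, DirectSum.decompose_zero]; simp

lemma aux_preim (T : F →+ G) (c : ℤ) (hT : ∀ (i : ℤ) (x : F), x ∈ ℱ i → T x ∈ 𝒢 (i + c))
    {u : G} {j : ℤ} (hu : u ∈ 𝒢 (j + c)) {v : F} (hv : T v = u) :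
    T ((DirectSum.decompose ℱ v) j : F) = u := by
  rw [← aux_proj ℱ 𝒢 T c hT j v, hv, DirectSum.decompose_of_mem_same 𝒢 hu]

end Aux

lemma aux_key {k S F G : Type*} [Ring k] [CommRing S]
    [AddCommGroup F] [Module S F] [Module k F] [AddCommGroup G] [Module S G] [Module k G]
    (ℱ : ℤ → Submodule k F) (𝒢 : ℤ → Submodule k G)
    [DirectSum.Decomposition ℱ] [DirectSum.Decomposition 𝒢]
    (hFlb : ∃ n₀ : ℤ, ∀ j : ℤ, j < n₀ → ℱ j = ⊥)
    (a b d₂ : ℤ) (hd₂ : 1 ≤ d₂)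
    (M : F →ₗ[S] G) (Mc : G →ₗ[S] F) (NF : F →ₗ[S] F) (NG : G →ₗ[S] G)
    (hM : ∀ (i : ℤ) (x : F), x ∈ ℱ i → M x ∈ 𝒢 (i + a))
    (hMc : ∀ (i : ℤ) (x : G), x ∈ 𝒢 i → Mc x ∈ ℱ (i + b))
    (hNF : ∀ (i : ℤ) (x : F), x ∈ ℱ i → NF x ∈ ℱ (i + d₂))
    (hcomm₁ : NG ∘ₗ M = M ∘ₗ NF) (hcomm₂ : Mc ∘ₗ NG = NF ∘ₗ Mc)
    (hex₁ : LinearMap.ker (Mc ∘ₗ M) = LinearMap.range NF)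
    (hex₄ : LinearMap.ker NG = LinearMap.range (M ∘ₗ Mc)) :
    LinearMap.ker M ≤ LinearMap.range (Mc ∘ₗ NG) := by
  obtain ⟨n₀, hn₀⟩ := hFlb
  -- comm at the element level
  have hc₁ : ∀ x : F, NG (M x) = M (NF x) := fun x => LinearMap.congr_fun hcomm₁ x
  have hc₂ : ∀ x : G, Mc (NG x) = NF (Mc x) := fun x => LinearMap.congr_fun hcomm₂ x
  have hMMc : ∀ (i : ℤ) (x : G), x ∈ 𝒢 i → M (Mc x) ∈ 𝒢 (i + (b + a)) := by
    intro i x hx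
    have := hM (i + b) (Mc x) (hMc i x hx)
    rwa [add_assoc] at this
  have main : ∀ n : ℕ, ∀ i : ℤ, i < n₀ + n → ∀ x : F, x ∈ ℱ i → M x = 0 →
      x ∈ LinearMap.range (Mc ∘ₗ NG) := by
    intro n
    induction n with
    | zero =>
      intro i hi x hx _
      rw [hn₀ i (by omega)] at hx
      simp only [Submodule.mem_bot] at hx
      simp [hx]
    | succ n ih =>
      intro i hi x hx hMx
      -- x ∈ ker (Mc ∘ M) = range NF
      have hx1 : x ∈ LinearMap.range NF := by
        rw [← hex₁]
        simp [LinearMap.mem_ker, hMx]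
      obtain ⟨y', hy'⟩ := hx1
      set y : F := ((DirectSum.decompose ℱ y') (i - d₂) : F) with hy_def
      have hxmem : x ∈ ℱ ((i - d₂) + d₂) := by rwa [sub_add_cancel]
      have hNFy : NF y = x :=
        aux_preim ℱ ℱ NF.toAddMonoidHom d₂ hNF hxmem (by simpa using hy')
      have hymem : y ∈ ℱ (i - d₂) := SetLike.coe_mem _
      -- M y ∈ ker NG = range (M ∘ Mc)
      have hMy : NG (M y) = 0 := by rw [hc₁, hNFy, hMx]
      have : M y ∈ LinearMap.range (M ∘ₗ Mc) := by
        rw [← hex₄]; exact hMy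
      obtain ⟨z', hz'⟩ := this
      set z : G := ((DirectSum.decompose 𝒢 z') (i - d₂ - b) : G) with hz_def
      have hMymem : M y ∈ 𝒢 ((i - d₂ - b) + (b + a)) := by
        have := hM (i - d₂) y hymem
        rwa [show (i - d₂ - b) + (b + a) = (i - d₂) + a by ring]
      have hMMcz : M (Mc z) = M y :=
        aux_preim 𝒢 𝒢 (M ∘ₗ Mc).toAddMonoidHom (b + a) hMMc hMymem (by simpa using hz')
      have hzmem : Mc z ∈ ℱ (i - d₂) := by
        have := hMc (i - d₂ - b) z (SetLike.coe_mem _)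
        rwa [sub_add_cancel] at this
      -- w := y - Mc z is in ker M, of lower degree
      have hwmem : y - Mc z ∈ ℱ (i - d₂) := sub_mem hymem hzmem
      have hMw : M (y - Mc z) = 0 := by rw [map_sub, hMMcz, sub_self]
      have hw : y - Mc z ∈ LinearMap.range (Mc ∘ₗ NG) :=
        ih (i - d₂) (by omega) _ hwmem hMw
      obtain ⟨v, hv⟩ := hw
      refine ⟨NG v + z, ?_⟩
      have : Mc (NG (NG v + z)) = NF (Mc (NG v)) + NF (Mc z) := by
        rw [map_add, map_add, hc₂ (NG v), hc₂ z]
      simp only [LinearMap.coe_comp, Function.comp_apply] at hv ⊢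
      rw [this, hv, ← map_add, sub_add_cancel, hNFy]
  classical
  intro x hx
  rw [← DirectSum.sum_support_decompose ℱ x]
  refine Submodule.sum_mem _ fun i _ => ?_
  refine main ((i - n₀).toNat + 1) i (by omega) _ (SetLike.coe_mem _) ?_
  have hx0 : M.toAddMonoidHom x = 0 := hx
  exact aux_ker ℱ 𝒢 M.toAddMonoidHom a (fun i x h => hM i x h) hx0 i

/-- **Lemma 2 of Kustin–Striuli–Vraciu.** Given homogeneous maps `M`, `M̌`, `N_F`, `N_G`
between finitely generated graded free modules over a standard graded algebra, satisfying
the stated commutation and exactness conditions, the kernels and images interchange as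
stated. -/
theorem stmt_4 {k S : Type*} [Field k] [CommRing S] [Algebra k S]
    (𝒜 : ℕ → Submodule k S) [GradedAlgebra 𝒜]
    -- standard graded
    (h0 : 𝒜 0 = (1 : Submodule k S))
    (hgen : ∀ i : ℕ, 𝒜 1 * 𝒜 i = 𝒜 (i + 1))
    (hfin : FiniteDimensional k (𝒜 1))
    {F G : Type*} [AddCommGroup F] [Module S F] [AddCommGroup G] [Module S G]
    [Module k F] [IsScalarTower k S F] [Module k G] [IsScalarTower k S G]
    -- finitely generated free modules
    [Module.Free S F] [Module.Finite S F] [Module.Free S G] [Module.Finite S G]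
    -- gradings
    (ℱ : ℤ → Submodule k F) (𝒢 : ℤ → Submodule k G)
    [DirectSum.Decomposition ℱ] [DirectSum.Decomposition 𝒢]
    (hsmulF : ∀ (i : ℕ) (j : ℤ) (s : S) (x : F), s ∈ 𝒜 i → x ∈ ℱ j → s • x ∈ ℱ (j + i))
    (hsmulG : ∀ (i : ℕ) (j : ℤ) (s : S) (x : G), s ∈ 𝒜 i → x ∈ 𝒢 j → s • x ∈ 𝒢 (j + i))
    -- components vanish in small degrees
    (hFlb : ∃ n₀ : ℤ, ∀ j : ℤ, j < n₀ → ℱ j = ⊥)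
    (hGlb : ∃ n₀ : ℤ, ∀ j : ℤ, j < n₀ → 𝒢 j = ⊥)
    -- the homogeneous maps
    (a b d₂ : ℤ) (hd₂ : 1 ≤ d₂)
    (M : F →ₗ[S] G) (Mc : G →ₗ[S] F) (NF : F →ₗ[S] F) (NG : G →ₗ[S] G)
    (hM : ∀ (i : ℤ) (x : F), x ∈ ℱ i → M x ∈ 𝒢 (i + a))
    (hMc : ∀ (i : ℤ) (x : G), x ∈ 𝒢 i → Mc x ∈ ℱ (i + b))
    (hNF : ∀ (i : ℤ) (x : F), x ∈ ℱ i → NF x ∈ ℱ (i + d₂))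
    (hNG : ∀ (i : ℤ) (x : G), x ∈ 𝒢 i → NG x ∈ 𝒢 (i + d₂))
    -- commutation relations
    (hcomm₁ : NG ∘ₗ M = M ∘ₗ NF) (hcomm₂ : Mc ∘ₗ NG = NF ∘ₗ Mc)
    -- exactness conditions
    (hex₁ : LinearMap.ker (Mc ∘ₗ M) = LinearMap.range NF)
    (hex₂ : LinearMap.ker NF = LinearMap.range (Mc ∘ₗ M))
    (hex₃ : LinearMap.ker (M ∘ₗ Mc) = LinearMap.range NG)
    (hex₄ : LinearMap.ker NG = LinearMap.range (M ∘ₗ Mc)) :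
    LinearMap.ker M = LinearMap.range (Mc ∘ₗ NG) ∧
    LinearMap.ker Mc = LinearMap.range (M ∘ₗ NF) ∧
    LinearMap.ker (Mc ∘ₗ NG) = LinearMap.range M ∧
    LinearMap.ker (M ∘ₗ NF) = LinearMap.range Mc := by
  have hc₁ : ∀ x : F, NG (M x) = M (NF x) := fun x => LinearMap.congr_fun hcomm₁ x
  have hc₂ : ∀ x : G, Mc (NG x) = NF (Mc x) := fun x => LinearMap.congr_fun hcomm₂ x
  have h1 : LinearMap.ker M = LinearMap.range (Mc ∘ₗ NG) := by
    apply le_antisymm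
    · exact aux_key ℱ 𝒢 hFlb a b d₂ hd₂ M Mc NF NG hM hMc hNF hcomm₁ hcomm₂ hex₁ hex₄
    · rintro _ ⟨y, rfl⟩
      have h : NG y ∈ LinearMap.range NG := ⟨y, rfl⟩
      rw [← hex₃] at h
      simpa [LinearMap.mem_ker] using h
  have h2 : LinearMap.ker Mc = LinearMap.range (M ∘ₗ NF) := by
    apply le_antisymm
    · exact aux_key 𝒢 ℱ hGlb b a d₂ hd₂ Mc M NG NF hMc hM hNG hcomm₂.symm hcomm₁.symm
        hex₃ hex₂
    · rintro _ ⟨y, rfl⟩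
      have h : NF y ∈ LinearMap.range NF := ⟨y, rfl⟩
      rw [← hex₁] at h
      simpa [LinearMap.mem_ker] using h
  have h3 : LinearMap.ker (Mc ∘ₗ NG) = LinearMap.range M := by
    apply le_antisymm
    · intro x hxk
      have h0 : Mc (NG x) = 0 := hxk
      have h : NF (Mc x) = 0 := by rw [← hc₂, h0]
      have hmem : Mc x ∈ LinearMap.range (Mc ∘ₗ M) := by rw [← hex₂]; exact h
      obtain ⟨y, hy⟩ := hmem
      have hker : x - M y ∈ LinearMap.ker Mc := by
        simp only [LinearMap.mem_ker, map_sub]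
        simp only [LinearMap.coe_comp, Function.comp_apply] at hy
        rw [hy, sub_self]
      rw [h2] at hker
      obtain ⟨w, hw⟩ := hker
      refine ⟨y + NF w, ?_⟩
      simp only [LinearMap.coe_comp, Function.comp_apply] at hw
      rw [map_add, hw]
      abel
    · rintro _ ⟨y, rfl⟩
      show Mc (NG (M y)) = 0
      have h : NF y ∈ LinearMap.range NF := ⟨y, rfl⟩
      rw [← hex₁] at h
      have h' : Mc (M (NF y)) = 0 := h
      rw [hc₁, h']
  have h4 : LinearMap.ker (M ∘ₗ NF) = LinearMap.range Mc := by
    apply le_antisymm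
    · intro x hxk
      have h0 : M (NF x) = 0 := hxk
      have h : NG (M x) = 0 := by rw [hc₁, h0]
      have hmem : M x ∈ LinearMap.range (M ∘ₗ Mc) := by rw [← hex₄]; exact h
      obtain ⟨y, hy⟩ := hmem
      have hker : x - Mc y ∈ LinearMap.ker M := by
        simp only [LinearMap.mem_ker, map_sub]
        simp only [LinearMap.coe_comp, Function.comp_apply] at hy
        rw [hy, sub_self]
      rw [h1] at hker
      obtain ⟨w, hw⟩ := hker
      refine ⟨y + NG w, ?_⟩
      simp only [LinearMap.coe_comp, Function.comp_apply] at hw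
      rw [map_add, hw]
      abel
    · rintro _ ⟨y, rfl⟩
      show M (NF (Mc y)) = 0
      have h : NG y ∈ LinearMap.range NG := ⟨y, rfl⟩
      rw [← hex₃] at h
      have h' : M (Mc (NG y)) = 0 := h
      rw [← hc₂, h']
  exact ⟨h1, h2, h3, h4⟩
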